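/- Let G be a non-compact Hausdorff topological group acting continuously on a compact Hausdorff topological space Σ. Then the non-wandering set Σ_nw attracts every point of Σ: for every σ ∈ Σ and every open set V ⊇ Σ_nw there exists a compact set K ⊆ G such that g•σ ∈ V for every g ∈ G \ K. -/

import Mathlib

open Set MulAction Pointwise

/-- The recurrence set `Rec(M,N) = {g ∈ G ∣ (g•M) ∩ N ≠ ∅}`. -/
def RecSet (G : Type*) {A : Type*} [SMul G A] (M N : Set A) : Set G :=
  {g : G | ((g • M) ∩ N).Nonempty}

/-- A subset `S` of a topological group is syndetic if `K·S = G` for some compact `K`. -/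
def Syndetic {G : Type*} [Mul G] [TopologicalSpace G] (S : Set G) : Prop :=
  ∃ K : Set G, IsCompact K ∧ K * S = Set.univ

/-- The limit set `L(σ) = ⋂_{K ⊆ G compact} closure {g•σ ∣ g ∈ G \ K}`. -/
def LimitSet (G : Type*) {A : Type*} [TopologicalSpace G] [TopologicalSpace A] [SMul G A]
    (σ : A) : Set A :=
  ⋂ (K : Set G) (_ : IsCompact K), closure ((fun g : G => g • σ) '' Kᶜ)

/-- The set of fixed points of the action. -/
def FixPts (G A : Type*) [SMul G A] : Set A := {σ | ∀ g : G, g • σ = σ}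

/-- The set of periodic points: those whose stabilizer is syndetic. -/
def PerPts (G A : Type*) [Mul G] [TopologicalSpace G] [SMul G A] : Set A :=
  {σ | Syndetic {g : G | g • σ = σ}}

/-- The set of weakly periodic points: those whose stabilizer is not compact. -/
def WPerPts (G A : Type*) [TopologicalSpace G] [SMul G A] : Set A :=
  {σ | ¬ IsCompact {g : G | g • σ = σ}}

/-- The set of almost periodic points: `Rec({σ},U)` is syndetic for every neighborhood
`U` of `σ`. -/
def APerPts (G A : Type*) [Mul G] [TopologicalSpace G] [TopologicalSpace A] [SMul G A] :
    Set A :=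
  {σ | ∀ U ∈ nhds σ, Syndetic {g : G | g • σ ∈ U}}

/-- The set of recurrent points: `σ ∈ L(σ)`. -/
def RecPts (G A : Type*) [TopologicalSpace G] [TopologicalSpace A] [SMul G A] : Set A :=
  {σ | σ ∈ LimitSet G σ}

/-- The set of non-wandering points: `Rec(W,W)` is not relatively compact for any
neighborhood `W` of `σ`. -/
def NWPts (G A : Type*) [TopologicalSpace G] [TopologicalSpace A] [SMul G A] : Set A :=
  {σ | ∀ W ∈ nhds σ, ¬ IsCompact (closure (RecSet G W W))}

/-- If `A` is compact, the non-wandering set attracts every point: for each `σ` and each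
open `V ⊇ Σ_nw` there is a compact `K ⊆ G` with `g•σ ∈ V` for all `g ∈ G \ K`. -/
lemma limitSet_subset_nwpts {G A : Type*} [Group G] [TopologicalSpace G] [IsTopologicalGroup G]
    [TopologicalSpace A] [MulAction G A] (σ : A) :
    LimitSet G σ ⊆ NWPts G A := by
  intro τ hτ W hW hC
  have h0 : ∀ K : Set G, IsCompact K → ∃ g, g ∉ K ∧ g • σ ∈ W := by
    intro K hK
    have hcl : τ ∈ closure ((fun g : G => g • σ) '' Kᶜ) := by
      simp only [LimitSet, mem_iInter] at hτ; exact hτ K hK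
    obtain ⟨x, hxW, hx⟩ := mem_closure_iff_nhds.mp hcl W hW
    obtain ⟨g, hgK, rfl⟩ := hx
    exact ⟨g, hgK, hxW⟩
  obtain ⟨g₀, -, hg₀⟩ := h0 ∅ isCompact_empty
  obtain ⟨g, hgK, hg⟩ := h0 (closure (RecSet G W W) * {g₀}) (hC.mul isCompact_singleton)
  apply hgK
  have hmem : g * g₀⁻¹ ∈ RecSet G W W := by
    refine ⟨g • σ, ⟨g₀ • σ, hg₀, ?_⟩, hg⟩
    show (g * g₀⁻¹) • (g₀ • σ) = g • σ
    rw [← mul_smul, inv_mul_cancel_right]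
  exact Set.mem_mul.mpr ⟨g * g₀⁻¹, subset_closure hmem, g₀, rfl, by group⟩

theorem stmt14 {G A : Type*} [Group G] [TopologicalSpace G] [IsTopologicalGroup G] [T2Space G]
    [TopologicalSpace A] [T2Space A] [CompactSpace A] [MulAction G A] [ContinuousSMul G A]
    (hG : ¬ CompactSpace G) (σ : A) (V : Set A) (hV : IsOpen V) (hnw : NWPts G A ⊆ V) :
    ∃ K : Set G, IsCompact K ∧ ∀ g : G, g ∉ K → g • σ ∈ V := by
  set t : {K : Set G // IsCompact K} → Set A :=
    fun K => closure ((fun g : G => g • σ) '' K.1ᶜ) ∩ Vᶜ with ht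
  have : Nonempty {K : Set G // IsCompact K} := ⟨⟨∅, isCompact_empty⟩⟩
  have hclosed : ∀ K, IsClosed (t K) := fun K =>
    isClosed_closure.inter (hV.isClosed_compl)
  have hempty : (univ : Set A) ∩ ⋂ K, t K = ∅ := by
    rw [univ_inter]
    rw [eq_empty_iff_forall_notMem]
    intro x hx
    simp only [ht, mem_iInter, mem_inter_iff, mem_compl_iff] at hx
    have hxL : x ∈ LimitSet G σ := by
      simp only [LimitSet, mem_iInter]
      intro K hK
      exact (hx ⟨K, hK⟩).1
    exact (hx ⟨∅, isCompact_empty⟩).2 (hnw (limitSet_subset_nwpts σ hxL))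
  have hdir : Directed (· ⊇ ·) t := by
    intro K₁ K₂
    refine ⟨⟨K₁.1 ∪ K₂.1, K₁.2.union K₂.2⟩, ?_, ?_⟩ <;>
      exact inter_subset_inter_left _ (closure_mono (image_mono (f := (fun g : G => g • σ)) (by
        simp only [compl_union]
        first
          | exact inter_subset_left
          | exact inter_subset_right)))
  obtain ⟨⟨K, hK⟩, hKe⟩ := isCompact_univ.elim_directed_family_closed t hclosed hempty hdir
  refine ⟨K, hK, fun g hg => ?_⟩
  by_contra hgV
  have : g • σ ∈ t ⟨K, hK⟩ := ⟨subset_closure (mem_image_of_mem _ hg), hgV⟩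
  rw [univ_inter, eq_empty_iff_forall_notMem] at hKe
  exact hKe _ this
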